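/- For the map f at μ = 4 written as (x₁,y₁) = (-x + b(x-y), x-y) with b(u) = 2π(cos u - 1) + 4(u - sin u), the Taylor coefficients satisfy b₂ = -π, b₃ = 2/3, and 2b₃ + b₂² = 4/3 + π² > 0. -/

import Mathlib

open Real

/-- For `b(u) = 2π(cos u - 1) + 4(u - sin u)`, the Taylor coefficients satisfy
`b₂ = b''(0)/2 = -π`, `b₃ = b'''(0)/6 = 2/3`, and `2b₃ + b₂² = 4/3 + π² > 0`. -/
theorem stmt_17
    (b : ℝ → ℝ)
    (hb : ∀ u, b u = 2 * π * (Real.cos u - 1) + 4 * (u - Real.sin u)) :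
    iteratedDeriv 2 b 0 / 2 = -π ∧ iteratedDeriv 3 b 0 / 6 = 2 / 3 ∧
    2 * (iteratedDeriv 3 b 0 / 6) + (iteratedDeriv 2 b 0 / 2) ^ 2 = 4 / 3 + π ^ 2 ∧
    (0 : ℝ) < 4 / 3 + π ^ 2 := by
  have hb' : b = fun u => 2 * π * (Real.cos u - 1) + 4 * (u - Real.sin u) := funext hb
  subst hb'
  have h1 : deriv (fun u : ℝ => 2 * π * (Real.cos u - 1) + 4 * (u - Real.sin u))
      = fun u => 2 * π * (-Real.sin u) + 4 * (1 - Real.cos u) := by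
    funext u
    have : HasDerivAt (fun u : ℝ => 2 * π * (Real.cos u - 1) + 4 * (u - Real.sin u))
        (2 * π * (-Real.sin u) + 4 * (1 - Real.cos u)) u := by
      have hc := (Real.hasDerivAt_cos u).sub_const 1
      have hs := (hasDerivAt_id u).sub (Real.hasDerivAt_sin u)
      exact (hc.const_mul (2*π)).add (hs.const_mul 4)
    exact this.deriv
  have h2 : deriv (fun u : ℝ => 2 * π * (-Real.sin u) + 4 * (1 - Real.cos u))
      = fun u => 2 * π * (-Real.cos u) + 4 * (Real.sin u) := by
    funext u
    have : HasDerivAt (fun u : ℝ => 2 * π * (-Real.sin u) + 4 * (1 - Real.cos u))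
        (2 * π * (-Real.cos u) + 4 * (Real.sin u)) u := by
      have hs := (Real.hasDerivAt_sin u).neg
      have hc := ((Real.hasDerivAt_cos u).const_sub 1)
      have := (hs.const_mul (2*π)).add (hc.const_mul 4)
      simpa [neg_neg, sub_eq_add_neg, Pi.add_def] using this
    exact this.deriv
  have h3 : deriv (fun u : ℝ => 2 * π * (-Real.cos u) + 4 * (Real.sin u))
      = fun u => 2 * π * (Real.sin u) + 4 * (Real.cos u) := by
    funext u
    have : HasDerivAt (fun u : ℝ => 2 * π * (-Real.cos u) + 4 * (Real.sin u))
        (2 * π * (Real.sin u) + 4 * (Real.cos u)) u := by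
      have hc := (Real.hasDerivAt_cos u).neg
      have hs := Real.hasDerivAt_sin u
      simpa [neg_neg, Pi.add_def] using (hc.const_mul (2*π)).add (hs.const_mul 4)
    exact this.deriv
  have e2 : iteratedDeriv 2 (fun u : ℝ => 2 * π * (Real.cos u - 1) + 4 * (u - Real.sin u)) 0 = -2*π := by
    rw [iteratedDeriv_succ, iteratedDeriv_one, h1, h2]
    simp
  have e3 : iteratedDeriv 3 (fun u : ℝ => 2 * π * (Real.cos u - 1) + 4 * (u - Real.sin u)) 0 = 4 := by
    show iteratedDeriv (2+1) _ 0 = 4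
    rw [iteratedDeriv_succ, iteratedDeriv_succ, iteratedDeriv_one, h1, h2, h3]
    simp
  rw [e2, e3]
  refine ⟨by ring, by norm_num, by ring, by positivity⟩
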